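/- Let V₂, V₁, W, Q, Q₂ be real Hilbert spaces and d₂ : V₂ → V₁, d₁ : V₁ → W, S₁ : V₁ → Q, S₂ : V₂ → Q₂, D : Q₂ → Q continuous linear maps with d₁∘d₂ = 0, S₁∘d₂ = D∘S₂, and d₁ surjective; let C_S ≥ 0 satisfy ‖S₁ τ‖ ≤ C_S √(‖τ‖² + ‖d₁ τ‖²) for all τ ∈ V₁. Let V₂ₕ ⊆ V₂, V₁ₕ ⊆ V₁, Wₕ ⊆ W, Q̄ₕ ⊆ Q be closed subspaces with d₂(V₂ₕ) ⊆ V₁ₕ and d₁(V₁ₕ) ⊆ Wₕ. Assume: (i) there exist linear maps Π₁ : V₁ → V₁ₕ and Π_W : W → Wₕ with d₁ ∘ Π₁ = Π_W ∘ d₁ and Π_W w = w for all w ∈ Wₕ; (ii) there is C_P > 0 such that every τ ∈ V₁ₕ that is orthogonal in V₁ to ker d₁ ∩ V₁ₕ satisfies √(‖τ‖² + ‖d₁ τ‖²) ≤ C_P ‖d₁ τ‖; (iii) there is C_IS > 0 such that for every q ∈ Q̄ₕ, the supremum over nonzero w ∈ V₂ₕ of ⟨D S₂ w, q⟩ / √(‖w‖²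 + ‖d₂ w‖²) is at least C_IS ‖q‖. Let P̄ : Q → Q̄ₕ be the orthogonal projection onto Q̄ₕ. Then for every v ∈ Wₕ and q ∈ Q̄ₕ there exists σ ∈ V₁ₕ with d₁ σ = v, P̄(S₁ σ) = q, and ‖σ‖ + ‖d₁ σ‖ ≤ C₂ (‖v‖ + ‖q‖), where C₂ = 1 + C_P + 1/C_IS + C_P·C_S/C_IS. -/

import Mathlib

set_option maxHeartbeats 1000000

open scoped RealInnerProductSpace

/-- From `a^2 ≤ b^2` and `0 ≤ b` deduce `a ≤ b`. -/
private lemma le_of_sq_le_sq' (a b : ℝ) (hb : 0 ≤ b) (h : a ^ 2 ≤ b ^ 2) : a ≤ b :=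
  calc a ≤ |a| := le_abs_self a
  _ = Real.sqrt (a ^ 2) := (Real.sqrt_sq_eq_abs a).symm
  _ ≤ Real.sqrt (b ^ 2) := Real.sqrt_le_sqrt h
  _ = b := Real.sqrt_sq hb

/-- Cauchy–Schwarz in `ℝ²`. -/
private lemma cauchy_two (x y u v : ℝ) :
    x * u + y * v ≤ Real.sqrt (x ^ 2 + y ^ 2) * Real.sqrt (u ^ 2 + v ^ 2) := by
  have hs : Real.sqrt (x ^ 2 + y ^ 2) ^ 2 = x ^ 2 + y ^ 2 := Real.sq_sqrt (by positivity)
  have ht : Real.sqrt (u ^ 2 + v ^ 2) ^ 2 = u ^ 2 + v ^ 2 := Real.sq_sqrt (by positivity)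
  refine le_of_sq_le_sq' _ _ (mul_nonneg (Real.sqrt_nonneg _) (Real.sqrt_nonneg _)) ?_
  rw [mul_pow, hs, ht]
  nlinarith [sq_nonneg (x * v - y * u)]


private lemma sqrt_sq_add_sq_pos (x y : ℝ) (hx : 0 < x) : 0 < Real.sqrt (x ^ 2 + y ^ 2) :=
  Real.sqrt_pos.mpr (by nlinarith [sq_nonneg y])

private lemma coercive_from_sqrt (c n a b : ℝ) (hc : 0 ≤ c) (hn : 0 ≤ n)
    (h : c * n ≤ Real.sqrt (a ^ 2 + b ^ 2)) : c ^ 2 * n * n ≤ a ^ 2 + b ^ 2 := by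
  have hg2 : Real.sqrt (a ^ 2 + b ^ 2) ^ 2 = a ^ 2 + b ^ 2 := Real.sq_sqrt (by positivity)
  nlinarith [mul_nonneg hc hn, Real.sqrt_nonneg (a ^ 2 + b ^ 2)]

private lemma bound_chain (a n Qn G C : ℝ) (hC : 0 < C) (hn : 0 ≤ n)
    (hQ : 0 ≤ Qn) (f1 : a ^ 2 ≤ G) (f2 : C ^ 2 * n * n ≤ G) (f3 : G ≤ Qn * n) :
    a * C ≤ Qn := by
  have hsq : a ^ 2 * C ^ 2 ≤ Qn ^ 2 := by
    rcases eq_or_lt_of_le hn with hzero | hpos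
    · have hG0 : G ≤ 0 := by rw [← hzero] at f3; linarith
      nlinarith [sq_nonneg a, sq_nonneg C]
    · have h5 : C ^ 2 * n ≤ Qn := by
        have := f2.trans f3
        exact le_of_mul_le_mul_right (by linarith) hpos
      nlinarith [mul_le_mul_of_nonneg_left h5 hQ,
        mul_le_mul_of_nonneg_right f3 (sq_nonneg C),
        mul_le_mul_of_nonneg_right f1 (sq_nonneg C), hpos.le, sq_nonneg C]
  refine le_of_sq_le_sq' _ _ hQ ?_
  calc (a * C) ^ 2 = a ^ 2 * C ^ 2 := by ring
    _ ≤ Qn ^ 2 := hsq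

/-- Auxiliary surjectivity-with-bound result: given the discrete auxiliary inf-sup
condition, every `q' ∈ Qh` is, weakly in `Qh`, of the form `M0 w` with a graph-norm
bound on `w`. -/
private lemma exists_graph_solution
    {V₂ V₁ Q : Type*}
    [NormedAddCommGroup V₂] [InnerProductSpace ℝ V₂] [CompleteSpace V₂]
    [NormedAddCommGroup V₁] [InnerProductSpace ℝ V₁]
    [NormedAddCommGroup Q] [InnerProductSpace ℝ Q] [CompleteSpace Q]
    (d₂ : V₂ →L[ℝ] V₁) (M0 : V₂ →L[ℝ] Q)
    (V₂h : Submodule ℝ V₂) (Qh : Submodule ℝ Q)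
    (hV₂c : IsClosed (V₂h : Set V₂)) (hQc : IsClosed (Qh : Set Q))
    (C_IS : ℝ) (hCIS : 0 < C_IS)
    (hinfsup : ∀ q ∈ Qh, C_IS * ‖q‖ ≤
      ⨆ w : {w : V₂ // w ∈ V₂h ∧ w ≠ 0},
        ⟪M0 w.1, q⟫ / Real.sqrt (‖w.1‖ ^ 2 + ‖d₂ w.1‖ ^ 2))
    (q' : Q) (hq' : q' ∈ Qh) :
    ∃ w ∈ V₂h, (∀ r ∈ Qh, ⟪M0 w, r⟫ = ⟪q', r⟫) ∧ ‖d₂ w‖ * C_IS ≤ ‖q'‖ := by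
  haveI : CompleteSpace V₂h := hV₂c.completeSpace_coe
  haveI : CompleteSpace Qh := hQc.completeSpace_coe
  set J : ↥V₂h →L[ℝ] V₂ := V₂h.subtypeL with hJ
  set M : ↥V₂h →L[ℝ] Q := M0.comp J with hM
  set N : ↥V₂h →L[ℝ] ↥Qh := (Submodule.orthogonalProjection Qh).comp M with hNdef
  set B₁ : ↥V₂h →L[ℝ] ↥V₂h →L[ℝ] ℝ :=
    (innerSL ℝ).bilinearComp J J + (innerSL ℝ).bilinearComp (d₂.comp J) (d₂.comp J) with hB₁def
  have hB₁app : ∀ a w : ↥V₂h,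
      B₁ a w = ⟪(a : V₂), (w : V₂)⟫ + ⟪d₂ (a : V₂), d₂ (w : V₂)⟫ := fun a w => rfl
  have hB₁symm : ∀ a w : ↥V₂h, B₁ a w = B₁ w a := by
    intro a w
    rw [hB₁app, hB₁app, real_inner_comm, real_inner_comm (d₂ (a : V₂))]
  have coercive₁ : IsCoercive B₁ := by
    refine ⟨1, one_pos, fun u => ?_⟩
    rw [hB₁app]
    have h1 : ⟪(u : V₂), (u : V₂)⟫ = ‖(u : V₂)‖ * ‖(u : V₂)‖ := real_inner_self_eq_norm_mul_norm _
    have h2 : (0:ℝ) ≤ ⟪d₂ (u : V₂), d₂ (u : V₂)⟫ := real_inner_self_nonneg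
    have h3 : ‖u‖ = ‖(u : V₂)‖ := rfl
    rw [h3, h1]; linarith
  set e₁ := coercive₁.continuousLinearEquivOfBilin with he₁
  set A : ↥Qh →L[ℝ] ↥V₂h :=
    (e₁.symm : ↥V₂h →L[ℝ] ↥V₂h).comp (ContinuousLinearMap.adjoint N) with hA
  have hAeq : ∀ r : ↥Qh, e₁ (A r) = ContinuousLinearMap.adjoint N r := by
    intro r
    show e₁ (e₁.symm (ContinuousLinearMap.adjoint N r)) = _
    exact e₁.apply_symm_apply _
  have hAapp : ∀ (r : ↥Qh) (w : ↥V₂h), B₁ (A r) w = ⟪r, N w⟫ := by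
    intro r w
    rw [← coercive₁.continuousLinearEquivOfBilin_apply (A r) w]
    show ⟪e₁ (A r), w⟫ = _
    rw [hAeq, ContinuousLinearMap.adjoint_inner_left]
  clear_value A e₁
  have hNapp : ∀ (w : ↥V₂h) (r : ↥Qh), ⟪r, N w⟫ = ⟪M0 (w : V₂), (r : Q)⟫ := by
    intro w r
    have h0 : ⟪M w - (Submodule.orthogonalProjection Qh (M w) : Q), (r : Q)⟫ = 0 :=
      Qh.starProjection_inner_eq_zero (M w) (r : Q) r.2
    rw [inner_sub_left] at h0
    have : ⟪r, N w⟫ = ⟪((N w : ↥Qh) : Q), (r : Q)⟫ := by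
      rw [Submodule.coe_inner, real_inner_comm]
    rw [this]
    have hNw : ((N w : ↥Qh) : Q) = (Submodule.orthogonalProjection Qh (M w) : Q) := rfl
    rw [hNw]
    have := real_inner_comm ((Submodule.orthogonalProjection Qh (M w) : Q)) (r : Q)
    have hM0 : M w = M0 (w : V₂) := rfl
    rw [← hM0]
    linarith [real_inner_comm (M w) (r : Q),
      real_inner_comm ((Submodule.orthogonalProjection Qh (M w) : Q)) (r : Q), h0]
  clear_value B₁
  -- the key coercivity estimate from the inf-sup condition
  have hkey : ∀ r : ↥Qh, C_IS * ‖(r : Q)‖ ≤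
      Real.sqrt (‖((A r : ↥V₂h) : V₂)‖ ^ 2 + ‖d₂ ((A r : ↥V₂h) : V₂)‖ ^ 2) := by
    intro r
    refine le_trans (hinfsup (r : Q) r.2) (Real.iSup_le ?_ (Real.sqrt_nonneg _))
    rintro ⟨w, hwmem, hwne⟩
    set g := Real.sqrt (‖((A r : ↥V₂h) : V₂)‖ ^ 2 + ‖d₂ ((A r : ↥V₂h) : V₂)‖ ^ 2) with hg
    have hwpos : (0:ℝ) < Real.sqrt (‖w‖ ^ 2 + ‖d₂ w‖ ^ 2) :=
      sqrt_sq_add_sq_pos _ _ (norm_pos_iff.mpr hwne)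
    rw [div_le_iff₀ hwpos]
    set w' : ↥V₂h := ⟨w, hwmem⟩ with hw'
    have h1 : ⟪M0 w, (r : Q)⟫ = B₁ (A r) w' := by
      rw [hAapp, hNapp]
    rw [h1, hB₁app]
    calc ⟪((A r : ↥V₂h) : V₂), ((w' : ↥V₂h) : V₂)⟫ +
          ⟪d₂ ((A r : ↥V₂h) : V₂), d₂ ((w' : ↥V₂h) : V₂)⟫
        ≤ ‖((A r : ↥V₂h) : V₂)‖ * ‖w‖ + ‖d₂ ((A r : ↥V₂h) : V₂)‖ * ‖d₂ w‖ := by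
          have ha := real_inner_le_norm ((A r : ↥V₂h) : V₂) w
          have hb := real_inner_le_norm (d₂ ((A r : ↥V₂h) : V₂)) (d₂ w)
          exact add_le_add ha hb
      _ ≤ g * Real.sqrt (‖w‖ ^ 2 + ‖d₂ w‖ ^ 2) := cauchy_two _ _ _ _
  set C2 : ↥Qh →L[ℝ] ↥Qh →L[ℝ] ℝ := B₁.bilinearComp A A with hC2
  have hC2app : ∀ y r : ↥Qh, C2 y r = B₁ (A y) (A r) := fun _ _ => rfl
  have hC2diag : ∀ r : ↥Qh, C2 r r =
      ‖((A r : ↥V₂h) : V₂)‖ ^ 2 + ‖d₂ ((A r : ↥V₂h) : V₂)‖ ^ 2 := by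
    intro r
    rw [hC2app, hB₁app, real_inner_self_eq_norm_sq, real_inner_self_eq_norm_sq]
  have coercive₂ : IsCoercive C2 := by
    refine ⟨C_IS ^ 2, by positivity, fun r => ?_⟩
    have hmain : C_IS ^ 2 * ‖(r : Q)‖ * ‖(r : Q)‖ ≤
        ‖((A r : ↥V₂h) : V₂)‖ ^ 2 + ‖d₂ ((A r : ↥V₂h) : V₂)‖ ^ 2 :=
      coercive_from_sqrt _ _ _ _ hCIS.le (norm_nonneg _) (hkey r)
    have hrn : ‖r‖ = ‖(r : Q)‖ := rfl
    calc C_IS ^ 2 * ‖r‖ * ‖r‖ = C_IS ^ 2 * ‖(r : Q)‖ * ‖(r : Q)‖ := by rw [hrn]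
      _ ≤ ‖((A r : ↥V₂h) : V₂)‖ ^ 2 + ‖d₂ ((A r : ↥V₂h) : V₂)‖ ^ 2 := hmain
      _ = C2 r r := (hC2diag r).symm
  set e₂ := coercive₂.continuousLinearEquivOfBilin with he₂
  set q'' : ↥Qh := ⟨q', hq'⟩ with hq''
  set y : ↥Qh := e₂.symm q'' with hy
  have hsolve : ∀ r : ↥Qh, C2 y r = ⟪q'', r⟫ := by
    intro r
    rw [← coercive₂.continuousLinearEquivOfBilin_apply y r]
    show ⟪e₂ y, r⟫ = _
    rw [hy, e₂.apply_symm_apply]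
  clear_value C2 y e₂
  set w0 : ↥V₂h := A y with hw0
  refine ⟨(w0 : V₂), w0.2, ?_, ?_⟩
  · intro r hr
    have h1 := hsolve ⟨r, hr⟩
    rw [hC2app, hB₁symm, hAapp, hNapp] at h1
    rw [Submodule.coe_inner] at h1
    exact h1
  · -- norm bound
    have hGy : C2 y y = ‖(w0 : V₂)‖ ^ 2 + ‖d₂ (w0 : V₂)‖ ^ 2 := hC2diag y
    have hG1 : C2 y y = ⟪q'', y⟫ := hsolve y
    have hG2 : ⟪q'', y⟫ ≤ ‖q'‖ * ‖(y : Q)‖ := by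
      have he : ⟪q'', y⟫ = ⟪(q'' : Q), (y : Q)⟫ := Submodule.coe_inner _ _ _
      have he2 : (q'' : Q) = q' := rfl
      rw [he2] at he
      have h := real_inner_le_norm (q' : Q) (y : Q)
      linarith only [he.le, he.ge, h]
    have hco2 : C_IS ^ 2 * ‖(y : Q)‖ * ‖(y : Q)‖ ≤
        ‖(w0 : V₂)‖ ^ 2 + ‖d₂ (w0 : V₂)‖ ^ 2 :=
      coercive_from_sqrt _ _ _ _ hCIS.le (norm_nonneg _) (hkey y)
    exact bound_chain _ _ _ (‖(w0 : V₂)‖ ^ 2 + ‖d₂ (w0 : V₂)‖ ^ 2) _ hCIS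
      (norm_nonneg _) (norm_nonneg _)
      (by linarith only [sq_nonneg ‖(w0 : V₂)‖])
      hco2
      (by linarith only [hGy, hG1, hG2])

/-- Discrete Brezzi inf-sup condition (S2): under the subcomplex property, commuting
cochain projections, the discrete Poincaré inequality and the discrete auxiliary inf-sup
condition, for every discrete `v ∈ Wₕ`, `q ∈ Q̄ₕ` there exists `σ ∈ V₁ₕ` with `d₁ σ = v`,
`P̄ (S₁ σ) = q` and `‖σ‖ + ‖d₁ σ‖ ≤ C₂ (‖v‖ + ‖q‖)`. -/
theorem discrete_inf_sup_S2
    {V₂ V₁ W Q Q₂ : Type*}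
    [NormedAddCommGroup V₂] [InnerProductSpace ℝ V₂] [CompleteSpace V₂]
    [NormedAddCommGroup V₁] [InnerProductSpace ℝ V₁] [CompleteSpace V₁]
    [NormedAddCommGroup W] [InnerProductSpace ℝ W] [CompleteSpace W]
    [NormedAddCommGroup Q] [InnerProductSpace ℝ Q] [CompleteSpace Q]
    [NormedAddCommGroup Q₂] [InnerProductSpace ℝ Q₂] [CompleteSpace Q₂]
    (d₂ : V₂ →L[ℝ] V₁) (d₁ : V₁ →L[ℝ] W) (S₁ : V₁ →L[ℝ] Q)
    (S₂ : V₂ →L[ℝ] Q₂) (D : Q₂ →L[ℝ] Q)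
    (hcomplex : ∀ x : V₂, d₁ (d₂ x) = 0)
    (hcomm : ∀ x : V₂, S₁ (d₂ x) = D (S₂ x))
    (hd₁surj : Function.Surjective d₁)
    (C_S : ℝ) (hCS : 0 ≤ C_S)
    (hS₁bound : ∀ τ : V₁, ‖S₁ τ‖ ≤ C_S * Real.sqrt (‖τ‖ ^ 2 + ‖d₁ τ‖ ^ 2))
    (V₂h : Submodule ℝ V₂) (V₁h : Submodule ℝ V₁) (Wh : Submodule ℝ W)
    (Qh : Submodule ℝ Q)
    (hV₂c : IsClosed (V₂h : Set V₂)) (hV₁c : IsClosed (V₁h : Set V₁))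
    (hWc : IsClosed (Wh : Set W)) (hQc : IsClosed (Qh : Set Q))
    (hd₂sub : ∀ x ∈ V₂h, d₂ x ∈ V₁h) (hd₁sub : ∀ x ∈ V₁h, d₁ x ∈ Wh)
    -- (i) commuting cochain projections
    (Pi₁ : V₁ →ₗ[ℝ] V₁) (PiW : W →ₗ[ℝ] W)
    (hPi₁mem : ∀ τ : V₁, Pi₁ τ ∈ V₁h) (hPiWmem : ∀ w : W, PiW w ∈ Wh)
    (hcochain : ∀ τ : V₁, d₁ (Pi₁ τ) = PiW (d₁ τ))
    (hPiWid : ∀ w ∈ Wh, PiW w = w)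
    -- (ii) discrete Poincaré inequality
    (C_P : ℝ) (hCP : 0 < C_P)
    (hPoincare : ∀ τ ∈ V₁h, (∀ κ ∈ V₁h, d₁ κ = 0 → ⟪τ, κ⟫ = 0) →
      Real.sqrt (‖τ‖ ^ 2 + ‖d₁ τ‖ ^ 2) ≤ C_P * ‖d₁ τ‖)
    -- (iii) discrete auxiliary inf-sup condition
    (C_IS : ℝ) (hCIS : 0 < C_IS)
    (hinfsup : ∀ q ∈ Qh, C_IS * ‖q‖ ≤
      ⨆ w : {w : V₂ // w ∈ V₂h ∧ w ≠ 0},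
        ⟪D (S₂ w.1), q⟫ / Real.sqrt (‖w.1‖ ^ 2 + ‖d₂ w.1‖ ^ 2))
    -- the orthogonal projection onto Q̄ₕ
    (Pbar : Q →ₗ[ℝ] Q) (hPmem : ∀ q : Q, Pbar q ∈ Qh)
    (hPorth : ∀ q : Q, ∀ r ∈ Qh, ⟪q - Pbar q, r⟫ = 0) :
    ∀ v ∈ Wh, ∀ q ∈ Qh, ∃ σ ∈ V₁h, d₁ σ = v ∧ Pbar (S₁ σ) = q ∧
      ‖σ‖ + ‖d₁ σ‖ ≤ (1 + C_P + 1 / C_IS + C_P * C_S / C_IS) * (‖v‖ + ‖q‖) := by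
  intro v hv q hq
  -- Step A: construct σ₁ ∈ V₁h with d₁ σ₁ = v, σ₁ ⊥ (ker d₁ ∩ V₁h)
  obtain ⟨τ, hτ⟩ := hd₁surj v
  set τ₁ := Pi₁ τ with hτ₁
  have hτ₁mem : τ₁ ∈ V₁h := hPi₁mem τ
  have hτ₁d : d₁ τ₁ = v := by rw [hτ₁, hcochain, hτ]; exact hPiWid v hv
  set Z : Submodule ℝ V₁ := V₁h ⊓ LinearMap.ker (d₁ : V₁ →ₗ[ℝ] W) with hZ
  have hZc : IsClosed (Z : Set V₁) := by
    have h1 : IsClosed ((LinearMap.ker (d₁ : V₁ →ₗ[ℝ] W) : Submodule ℝ V₁) : Set V₁) :=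
      ContinuousLinearMap.isClosed_ker d₁
    have h2 : (Z : Set V₁) = (V₁h : Set V₁) ∩ (LinearMap.ker (d₁ : V₁ →ₗ[ℝ] W) : Submodule ℝ V₁) := rfl
    rw [h2]
    exact hV₁c.inter h1
  haveI : CompleteSpace Z := hZc.completeSpace_coe
  set κ : V₁ := (Submodule.orthogonalProjection Z τ₁ : V₁) with hκ
  have hκZ : κ ∈ Z := (Submodule.orthogonalProjection Z τ₁).2
  set σ₁ : V₁ := τ₁ - κ with hσ₁
  have hσ₁mem : σ₁ ∈ V₁h := Submodule.sub_mem _ hτ₁mem hκZ.1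
  have hκker : d₁ κ = 0 := hκZ.2
  have hσ₁d : d₁ σ₁ = v := by rw [hσ₁, map_sub, hκker, hτ₁d, sub_zero]
  have hσ₁perp : σ₁ ∈ Zᗮ := Z.sub_starProjection_mem_orthogonal τ₁
  have hσ₁orth : ∀ κ' ∈ V₁h, d₁ κ' = 0 → ⟪σ₁, κ'⟫ = 0 := by
    intro κ' hκ'mem hκ'd
    have hκ'Z : κ' ∈ Z := ⟨hκ'mem, hκ'd⟩
    have := hσ₁perp κ' hκ'Z
    rw [real_inner_comm]; exact this
  have hσ₁P : Real.sqrt (‖σ₁‖ ^ 2 + ‖d₁ σ₁‖ ^ 2) ≤ C_P * ‖v‖ := by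
    have := hPoincare σ₁ hσ₁mem hσ₁orth
    rw [hσ₁d] at this ⊢
    exact this
  have hσ₁norm : ‖σ₁‖ ≤ C_P * ‖v‖ := by
    refine le_trans ?_ hσ₁P
    calc ‖σ₁‖ = Real.sqrt (‖σ₁‖ ^ 2) := (Real.sqrt_sq (norm_nonneg _)).symm
      _ ≤ Real.sqrt (‖σ₁‖ ^ 2 + ‖d₁ σ₁‖ ^ 2) := Real.sqrt_le_sqrt (le_add_of_nonneg_right (sq_nonneg _))
  have hS₁σ₁ : ‖S₁ σ₁‖ ≤ C_S * (C_P * ‖v‖) :=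
    (hS₁bound σ₁).trans (mul_le_mul_of_nonneg_left hσ₁P hCS)
  -- the contraction property of Pbar
  have hPcontract : ∀ x : Q, ‖Pbar x‖ ≤ ‖x‖ := by
    intro x
    have h0 := hPorth x (Pbar x) (hPmem x)
    have h1 : ‖x‖ ^ 2 = ‖x - Pbar x‖ ^ 2 + ‖Pbar x‖ ^ 2 := by
      have := norm_add_sq_real (x - Pbar x) (Pbar x)
      rw [sub_add_cancel] at this
      rw [this, h0]; ring
    refine le_of_sq_le_sq' _ _ (norm_nonneg x) ?_
    linarith only [h1, sq_nonneg ‖x - Pbar x‖]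
  -- Step B: solve for the correction
  set q' : Q := q - Pbar (S₁ σ₁) with hq'def
  have hq'mem : q' ∈ Qh := Submodule.sub_mem _ hq (hPmem _)
  have hq'norm : ‖q'‖ ≤ ‖q‖ + C_S * (C_P * ‖v‖) := by
    calc ‖q'‖ ≤ ‖q‖ + ‖Pbar (S₁ σ₁)‖ := norm_sub_le _ _
      _ ≤ ‖q‖ + ‖S₁ σ₁‖ := by linarith [hPcontract (S₁ σ₁)]
      _ ≤ ‖q‖ + C_S * (C_P * ‖v‖) := by linarith [hS₁σ₁]
  obtain ⟨w, hwmem, hwsolve, hwbound⟩ := exists_graph_solution d₂ (D.comp S₂) V₂h Qh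
    hV₂c hQc C_IS hCIS (by simpa using hinfsup) q' hq'mem
  -- Step C: assemble
  refine ⟨σ₁ + d₂ w, Submodule.add_mem _ hσ₁mem (hd₂sub w hwmem), ?_, ?_, ?_⟩
  · rw [map_add, hσ₁d, hcomplex, add_zero]
  · -- Pbar (S₁ (σ₁ + d₂ w)) = q
    have hDS : ∀ r ∈ Qh, ⟪D (S₂ w), r⟫ = ⟪q', r⟫ := by
      intro r hr
      have := hwsolve r hr
      simpa using this
    have hPeq : Pbar (D (S₂ w)) = q' := by
      have hz : ∀ r ∈ Qh, ⟪Pbar (D (S₂ w)) - q', r⟫ = 0 := by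
        intro r hr
        have h1 := hPorth (D (S₂ w)) r hr
        have h2 := hDS r hr
        have h3 : ⟪Pbar (D (S₂ w)) - q', r⟫
            = ⟪D (S₂ w), r⟫ - ⟪q', r⟫ - ⟪D (S₂ w) - Pbar (D (S₂ w)), r⟫ := by
          rw [inner_sub_left, inner_sub_left, inner_sub_left]; ring
        rw [h3, h1, h2]; ring
      have hmem : Pbar (D (S₂ w)) - q' ∈ Qh := Submodule.sub_mem _ (hPmem _) hq'mem
      have h5 := hz _ hmem
      rw [real_inner_self_eq_norm_sq] at h5
      exact sub_eq_zero.mp (norm_eq_zero.mp (sq_eq_zero_iff.mp h5))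
    rw [map_add, hcomm, map_add, hPeq, hq'def]
    abel
  · -- the norm bound
    have hd₁ : d₁ (σ₁ + d₂ w) = v := by rw [map_add, hσ₁d, hcomplex, add_zero]
    rw [hd₁]
    have hn : ‖σ₁ + d₂ w‖ ≤ ‖σ₁‖ + ‖d₂ w‖ := norm_add_le _ _
    have hwb : ‖d₂ w‖ ≤ (‖q‖ + C_S * (C_P * ‖v‖)) / C_IS := by
      rw [le_div_iff₀ hCIS]
      exact hwbound.trans hq'norm
    have hci : (0:ℝ) < 1 / C_IS := by positivity
    have hv0 : (0:ℝ) ≤ ‖v‖ := norm_nonneg v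
    have hq0 : (0:ℝ) ≤ ‖q‖ := norm_nonneg q
    have hexp : (‖q‖ + C_S * (C_P * ‖v‖)) / C_IS
        = (1 / C_IS) * ‖q‖ + C_P * C_S / C_IS * ‖v‖ := by
      field_simp
    rw [hexp] at hwb
    have hb1 : 0 ≤ C_P * ‖q‖ := mul_nonneg hCP.le hq0
    have hb2 : 0 ≤ 1 / C_IS * ‖v‖ := mul_nonneg hci.le hv0
    have hb3 : 0 ≤ C_P * C_S / C_IS * ‖q‖ :=
      mul_nonneg (div_nonneg (mul_nonneg hCP.le hCS) hCIS.le) hq0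
    nlinarith [hn, hσ₁norm, hwb, hq0, hb1, hb2, hb3]
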